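/- arXiv:1401.1037 — 3 statements merged into one kernel-verified Lean document; each statement's English description precedes it below -/
import Mathlib

section
/- Let $\mathfrak{g} = \mathfrak{k} \oplus \mathfrak{p}$ be a vector space decomposition of a Lie algebra $\mathfrak{g}$ with $[\mathfrak{k},\mathfrak{k}] \subseteq \mathfrak{k}$, $[\mathfrak{k},\mathfrak{p}] \subseteq \mathfrak{p}$, $[\mathfrak{p},\mathfrak{p}] \subseteq \mathfrak{k}$, and let $\mathfrak{g}_u$ be the compact dual Lie algebra on the same vector space with the bracket $[\cdot,\cdot]_u$ modified by a sign on $\mathfrak{p} \times \mathfrak{p}$. Let $\mathfrak{a}$ be a trivial module. Then the identity on underlying vector spaces induces an isomorphism of cochain complexes between $\{\omega\colon \Lambda^n\mathfrak{g} \to \mathfrak{a} \mid i_y\omega = 0, \theta_y\omega = 0 \,\forall y \in \mathfrak{k}\}$ and the corresponding relative complex for $(\mathfrak{g}_u,\mathfrak{k})$, and hence an isomorphism $\mu^n\colon H^n_{Lie}((\mathfrak{g},\mathfrak{k});\mathfrak{a}) \xrightarrow{\cong} H^n_{Lie}((\mathfrak{g}_u,\mathfrak{k});\mathfrak{a})$.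 -/
/-- Chevalley–Eilenberg differential, with the Lie bracket `br` and the module
action `ρ` given explicitly:
`(dω)(x₀,…,xₙ) = ∑ᵢ (-1)ⁱ xᵢ.ω(…,x̂ᵢ,…) + ∑_{i<j} (-1)^{i+j} ω([xᵢ,xⱼ],…,x̂ᵢ,…,x̂ⱼ,…)`. -/
def lieD {L M : Type*} [AddCommGroup M] (br : L → L → L) (ρ : L → M → M) (n : ℕ)
    (f : (Fin n → L) → M) : (Fin (n + 1) → L) → M :=
  fun x =>
    (∑ i : Fin (n + 1), (-1 : ℤ) ^ (i : ℕ) • ρ (x i) (f (x ∘ i.succAbove))) +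
    ∑ i : Fin (n + 1), ∑ j : Fin (n + 1),
      if (i : ℕ) < (j : ℕ) then
        (-1 : ℤ) ^ ((i : ℕ) + (j : ℕ)) • f (fun k : Fin n =>
          if (k : ℕ) = 0 then br (x i) (x j)
          else x ⟨if (k : ℕ) - 1 < (i : ℕ) then (k : ℕ) - 1
                  else if (k : ℕ) < (j : ℕ) then (k : ℕ) else (k : ℕ) + 1,
                  by have := k.isLt; split_ifs <;> omega⟩)
      else 0

/-- The conditions cutting out the relative (Chevalley–Eilenberg) cochains for a
subalgebra `𝔥`: vanishing of all insertions `i_y` and all Lie derivatives `θ_y`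
for `y ∈ 𝔥`. -/
def IsRelCochain {L M : Type*} [AddCommGroup M] (br : L → L → L) (ρ : L → M → M)
    (𝔥 : Set L) {n : ℕ} (f : (Fin n → L) → M) : Prop :=
  (∀ x : Fin n → L, (∃ i, x i ∈ 𝔥) → f x = 0) ∧
  (∀ y ∈ 𝔥, ∀ x : Fin n → L,
    (∑ i : Fin n, f (Function.update x i (br (x i) y))) + ρ y (f x) = 0)

/-- for a decomposition `𝔤 = 𝔨 ⊕ 𝔭` with `[𝔨,𝔨] ⊆ 𝔨`, `[𝔨,𝔭] ⊆ 𝔭`,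
`[𝔭,𝔭] ⊆ 𝔨`, its compact dual bracket `[x,y]ᵤ = [x,y] - 2[π_𝔭 x, π_𝔭 y]`, and a
trivial module `𝔞`, the identity on underlying vector spaces identifies the
relative Chevalley–Eilenberg complex of `(𝔤,𝔨)` with that of `(𝔤ᵤ,𝔨)`: a cochain
is relative for one bracket iff it is for the other, and the two differentials
agree on relative cochains.  Hence `μⁿ : Hⁿ((𝔤,𝔨);𝔞) ≅ Hⁿ((𝔤ᵤ,𝔨);𝔞)`. -/
theorem compact_dual_relative_complex_iso
    {𝔤 𝔞 : Type*} [LieRing 𝔤] [LieAlgebra ℝ 𝔤] [AddCommGroup 𝔞] [Module ℝ 𝔞]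
    (𝔨 𝔭 : Submodule ℝ 𝔤) (hdisj : 𝔨 ⊓ 𝔭 = ⊥)
    (πk πp : 𝔤 →ₗ[ℝ] 𝔤)
    (hπk : ∀ x, πk x ∈ 𝔨) (hπp : ∀ x, πp x ∈ 𝔭) (hsum : ∀ x, πk x + πp x = x)
    (hkk : ∀ x ∈ 𝔨, ∀ y ∈ 𝔨, ⁅x, y⁆ ∈ 𝔨)
    (hkp : ∀ x ∈ 𝔨, ∀ y ∈ 𝔭, ⁅x, y⁆ ∈ 𝔭)
    (hpp : ∀ x ∈ 𝔭, ∀ y ∈ 𝔭, ⁅x, y⁆ ∈ 𝔨)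
    (Bu : 𝔤 → 𝔤 → 𝔤) (hBu : Bu = fun x y => ⁅x, y⁆ - (2 : ℤ) • ⁅πp x, πp y⁆)
    (n : ℕ) (ω : 𝔤 [⋀^Fin n]→ₗ[ℝ] 𝔞) :
    (IsRelCochain (fun a b => ⁅a, b⁆) (fun _ _ => (0 : 𝔞)) (𝔨 : Set 𝔤) ⇑ω ↔
      IsRelCochain Bu (fun _ _ => (0 : 𝔞)) (𝔨 : Set 𝔤) ⇑ω) ∧
    (IsRelCochain (fun a b => ⁅a, b⁆) (fun _ _ => (0 : 𝔞)) (𝔨 : Set 𝔤) ⇑ω →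
      lieD (fun a b => ⁅a, b⁆) (fun _ _ => (0 : 𝔞)) n ⇑ω =
        lieD Bu (fun _ _ => (0 : 𝔞)) n ⇑ω) := by
  -- π_𝔭 vanishes on 𝔨
  have hpy : ∀ y ∈ 𝔨, πp y = 0 := by
    intro y hy
    have h1 : πp y ∈ 𝔨 := by
      have heq : πp y = y - πk y := eq_sub_of_add_eq' (hsum y)
      rw [heq]
      exact Submodule.sub_mem _ hy (hπk y)
    have h2 : πp y ∈ 𝔨 ⊓ 𝔭 := ⟨h1, hπp y⟩
    rwa [hdisj, Submodule.mem_bot] at h2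
  -- the two brackets agree when the second argument is in 𝔨
  have hBuk : ∀ y ∈ 𝔨, ∀ a, Bu a y = ⁅a, y⁆ := by
    intro y hy a
    simp [hBu, hpy y hy]
  constructor
  · constructor
    · rintro ⟨h1, h2⟩
      refine ⟨h1, fun y hy x => ?_⟩
      simp only [hBuk y hy]
      exact h2 y hy x
    · rintro ⟨h1, h2⟩
      refine ⟨h1, fun y hy x => ?_⟩
      have := h2 y hy x
      simpa only [hBuk y hy] using this
  · rintro ⟨h1, _⟩
    funext x
    unfold lieD
    congr 1
    refine Finset.sum_congr rfl fun i _ => Finset.sum_congr rfl fun j _ => ?_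
    split_ifs with hij
    · congr 1
      rcases n with _ | m
      · congr 1
        funext k
        exact absurd k.isLt (by omega)
      -- n = m + 1
      set rest : Fin (m + 1) → 𝔤 := fun k =>
        if h : (k : ℕ) = 0 then 0
        else x ⟨if (k : ℕ) - 1 < (i : ℕ) then (k : ℕ) - 1
                else if (k : ℕ) < (j : ℕ) then (k : ℕ) else (k : ℕ) + 1,
                by have := k.isLt; split_ifs <;> omega⟩ with hrest
      have harg : ∀ c : 𝔤, (fun k : Fin (m + 1) =>
          if (k : ℕ) = 0 then c
          else x ⟨if (k : ℕ) - 1 < (i : ℕ) then (k : ℕ) - 1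
                  else if (k : ℕ) < (j : ℕ) then (k : ℕ) else (k : ℕ) + 1,
                  by have := k.isLt; split_ifs <;> omega⟩) =
          Function.update rest (0 : Fin (m + 1)) c := by
        intro c
        funext k
        by_cases hk : k = (0 : Fin (m + 1))
        · subst hk; simp [Function.update]
        · have hk' : (k : ℕ) ≠ 0 := fun h => hk (Fin.ext h)
          simp [Function.update, hk, hrest, hk']
      rw [harg, harg, hBu]
      have hmem : (2 : ℤ) • ⁅πp (x i), πp (x j)⁆ ∈ 𝔨 := by
        have := hpp _ (hπp (x i)) _ (hπp (x j))
        exact Submodule.smul_of_tower_mem _ _ this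
      simp only []
      rw [sub_eq_add_neg, ω.map_update_add]
      have hz : ω (Function.update rest (0 : Fin (m + 1))
          (-((2 : ℤ) • ⁅πp (x i), πp (x j)⁆))) = 0 := by
        apply h1
        exact ⟨0, by simp [Function.update_self]; exact hmem⟩
      rw [hz, add_zero]
    · rfl
end

section
/- Let $\mathfrak{g}$ be a real Lie algebra, $\mathfrak{k} \leq \mathfrak{g}$ a subalgebra, and suppose there is a vector space complement $\mathfrak{p}$ with $\mathfrak{g} = \mathfrak{k} \oplus \mathfrak{p}$, $[\mathfrak{k},\mathfrak{p}] \subseteq \mathfrak{p}$ and $[\mathfrak{p},\mathfrak{p}] \subseteq \mathfrak{k}$. Let $\pi_{\mathfrak{k}}, \pi_{\mathfrak{p}}$ be the projections and $\mathfrak{a}$ a trivial module. For $\lambda \in \mathrm{Hom}(\mathfrak{k},\mathfrak{a})^{\mathfrak{k}}$ define $CW^1(\lambda)(x,y) := \tfrac{1}{2}\lambda([\pi_{\mathfrak{p}}(x),\pi_{\mathfrak{p}}(y)])$. Then $CW^1(\lambda)$ is a relative 2-cochain in $C^2_{CE}((\mathfrak{g},\mathfrak{k}),\mathfrak{a})$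 and is closed: $d_{CE}(CW^1(\lambda)) = 0$. Hence $CW^1$ defines a map $\mathrm{Hom}(\mathfrak{k},\mathfrak{a})^{\mathfrak{k}} \to H^2_{Lie}((\mathfrak{g},\mathfrak{k});\mathfrak{a})$. -/
/-- for a decomposition `𝔤 = 𝔨 ⊕ 𝔭` with `[𝔨,𝔨] ⊆ 𝔨`, `[𝔨,𝔭] ⊆ 𝔭`,
`[𝔭,𝔭] ⊆ 𝔨`, a trivial module `𝔞` and a `𝔨`-invariant `λ ∈ Hom(𝔨,𝔞)^𝔨` (i.e.
`λ([𝔨,𝔨]) = 0`), the Chern–Weil cochain `CW¹(λ)(x,y) = ½ λ([π_𝔭 x, π_𝔭 y])` is a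
relative 2-cochain in `C²_{CE}((𝔤,𝔨),𝔞)` and is closed, `d_{CE}(CW¹(λ)) = 0`;
hence `CW¹` defines a map `Hom(𝔨,𝔞)^𝔨 → H²_{Lie}((𝔤,𝔨);𝔞)`. -/
theorem chernWeil_one_closed_relative
    {𝔤 𝔞 : Type*} [LieRing 𝔤] [LieAlgebra ℝ 𝔤] [AddCommGroup 𝔞] [Module ℝ 𝔞]
    (𝔨 𝔭 : Submodule ℝ 𝔤) (hdisj : 𝔨 ⊓ 𝔭 = ⊥)
    (πk πp : 𝔤 →ₗ[ℝ] 𝔤)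
    (hπk : ∀ x, πk x ∈ 𝔨) (hπp : ∀ x, πp x ∈ 𝔭) (hsum : ∀ x, πk x + πp x = x)
    (hkk : ∀ x ∈ 𝔨, ∀ y ∈ 𝔨, ⁅x, y⁆ ∈ 𝔨)
    (hkp : ∀ x ∈ 𝔨, ∀ y ∈ 𝔭, ⁅x, y⁆ ∈ 𝔭)
    (hpp : ∀ x ∈ 𝔭, ∀ y ∈ 𝔭, ⁅x, y⁆ ∈ 𝔨)
    (lam : 𝔨 →ₗ[ℝ] 𝔞)
    (hlam : ∀ (a b : 𝔤) (ha : a ∈ 𝔨) (hb : b ∈ 𝔨), lam ⟨⁅a, b⁆, hkk a ha b hb⟩ = 0)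
    (CW1 : (Fin 2 → 𝔤) → 𝔞)
    (hCW1 : CW1 = fun x => (2⁻¹ : ℝ) •
      lam ⟨⁅πp (x 0), πp (x 1)⁆, hpp _ (hπp (x 0)) _ (hπp (x 1))⟩) :
    IsRelCochain (fun a b => ⁅a, b⁆) (fun _ _ => (0 : 𝔞)) (𝔨 : Set 𝔤) CW1 ∧
    lieD (fun a b => ⁅a, b⁆) (fun _ _ => (0 : 𝔞)) 2 CW1 = 0 := by
  -- The composite `Λ = lam ∘ πk` as a linear map `𝔤 →ₗ 𝔞`.
  set Λ : 𝔤 →ₗ[ℝ] 𝔞 := lam ∘ₗ (πk.codRestrict 𝔨 hπk) with hΛdef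
  have hΛ : ∀ z, Λ z = lam ⟨πk z, hπk z⟩ := fun z => rfl
  -- basic facts about the projections
  have hp0 : ∀ z ∈ 𝔨, πp z = 0 := by
    intro z hz
    have h1 : πp z ∈ 𝔨 := by
      have : πp z = z - πk z := by rw [eq_sub_iff_add_eq, add_comm]; exact hsum z
      rw [this]; exact sub_mem hz (hπk z)
    have : πp z ∈ 𝔨 ⊓ 𝔭 := ⟨h1, hπp z⟩
    rw [hdisj] at this; simpa using this
  have hk0 : ∀ z ∈ 𝔭, πk z = 0 := by
    intro z hz
    have h1 : πk z ∈ 𝔭 := by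
      have : πk z = z - πp z := by rw [eq_sub_iff_add_eq]; exact hsum z
      rw [this]; exact sub_mem hz (hπp z)
    have : πk z ∈ 𝔨 ⊓ 𝔭 := ⟨hπk z, h1⟩
    rw [hdisj] at this; simpa using this
  have hΛk : ∀ z (hz : z ∈ 𝔨), Λ z = lam ⟨z, hz⟩ := by
    intro z hz
    have hkz : πk z = z := by
      have := hsum z; rw [hp0 z hz, add_zero] at this; exact this
    rw [hΛ]; congr 1; exact Subtype.ext hkz
  have hΛp : ∀ z ∈ 𝔭, Λ z = 0 := by
    intro z hz
    rw [hΛ]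
    have : (⟨πk z, hπk z⟩ : 𝔨) = 0 := Subtype.ext (hk0 z hz)
    rw [this, map_zero]
  have hΛkk : ∀ a (ha : a ∈ 𝔨) b (hb : b ∈ 𝔨), Λ ⁅a, b⁆ = 0 := by
    intro a ha b hb
    rw [hΛk _ (hkk a ha b hb)]; exact hlam a b ha hb
  -- Λ kills any bracket with a 𝔨-element on the left
  have hky : ∀ y ∈ 𝔨, ∀ z, Λ ⁅y, z⁆ = 0 := by
    intro y hy z
    have hz : z = πk z + πp z := (hsum z).symm
    rw [hz]
    calc Λ ⁅y, πk z + πp z⁆ = Λ ⁅y, πk z⁆ + Λ ⁅y, πp z⁆ := by rw [lie_add, map_add]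
    _ = 0 := by
        rw [hΛkk y hy _ (hπk z), hΛp _ (hkp y hy _ (hπp z)), add_zero]
  have hky' : ∀ y ∈ 𝔨, ∀ z : 𝔤, Λ ⁅z, y⁆ = 0 := by
    intro y hy z
    rw [← lie_skew z y, map_neg, hky y hy z, neg_zero]
  -- the key identity : Λ⁅πp a, πp b⁆ = Λ⁅a, b⁆
  have hkey : ∀ a b, Λ ⁅πp a, πp b⁆ = Λ ⁅a, b⁆ := by
    intro a b
    have : ⁅a, b⁆ = ⁅πk a, πk b⁆ + ⁅πk a, πp b⁆ + ⁅πp a, πk b⁆ + ⁅πp a, πp b⁆ := by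
      conv_lhs => rw [← hsum a, ← hsum b]
      rw [add_lie, lie_add, lie_add]; abel
    rw [this, map_add, map_add, map_add, hΛkk _ (hπk a) _ (hπk b),
      hΛp _ (hkp _ (hπk a) _ (hπp b)), hky' _ (hπk b) (πp a), zero_add, zero_add, zero_add]
  -- simplified formula for CW1
  have hCW : ∀ v : Fin 2 → 𝔤, CW1 v = (2⁻¹ : ℝ) • Λ ⁅v 0, v 1⁆ := by
    intro v
    rw [hCW1]
    show (2⁻¹ : ℝ) • lam ⟨⁅πp (v 0), πp (v 1)⁆, _⟩ = _
    rw [← hΛk _ (hpp _ (hπp (v 0)) _ (hπp (v 1))), hkey]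
  constructor
  · constructor
    · rintro x ⟨i, hi⟩
      rw [hCW]
      fin_cases i
      · rw [hky (x 0) hi (x 1), smul_zero]
      · rw [hky' (x 1) hi (x 0), smul_zero]
    · intro y hy x
      rw [Fin.sum_univ_two]
      simp only [Function.update_self, Function.update_of_ne (by decide : (0 : Fin 2) ≠ 1),
        Function.update_of_ne (by decide : (1 : Fin 2) ≠ 0)]
      rw [hCW, hCW]
      simp only [Function.update_self, Function.update_of_ne (by decide : (0 : Fin 2) ≠ 1),
        Function.update_of_ne (by decide : (1 : Fin 2) ≠ 0)]
      rw [add_zero, ← smul_add, ← map_add]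
      have hbr : ⁅⁅x 0, y⁆, x 1⁆ + ⁅x 0, ⁅x 1, y⁆⁆ = -⁅y, ⁅x 0, x 1⁆⁆ := by
        rw [lie_lie, ← lie_skew (x 1) y, lie_neg]
        abel
      rw [hbr, map_neg, hky y hy ⁅x 0, x 1⁆, neg_zero, smul_zero]
  · funext x
    show (∑ i : Fin 3, (-1 : ℤ) ^ (i : ℕ) • (0 : 𝔞)) + _ = 0
    simp only [smul_zero, Finset.sum_const_zero, zero_add]
    simp only [Fin.sum_univ_succ, Fin.sum_univ_zero, add_zero]
    norm_num
    simp only [hCW]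
    norm_num
    simp only [show (⟨2, by omega⟩ : Fin (2+1)) = (2 : Fin 3) from rfl]
    rw [← lie_skew (x 1) (x 2), ← lie_skew (x 0) (x 1), ← lie_skew (x 0) (x 2)]
    simp only [lie_neg, map_neg]
    have hjac : Λ ⁅x 1, ⁅x 2, x 0⁆⁆ = Λ ⁅x 0, ⁅x 2, x 1⁆⁆ + Λ ⁅x 2, ⁅x 1, x 0⁆⁆ := by
      rw [← map_add]
      congr 1
      rw [(lie_skew (x 2) (x 0)).symm, lie_neg]
      exact (add_eq_zero_iff_eq_neg.mp (lie_jacobi (x 0) (x 2) (x 1))).symm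
    rw [hjac]
    module
end

section
/- Let $\mathfrak{k}$ be a Lie algebra, $\mathfrak{g} = \mathfrak{k}_1 \oplus \mathfrak{k}_2$ with $\mathfrak{k}_1 = \mathfrak{k}_2 = \mathfrak{k}$, and $\mathfrak{a}$ a trivial module over a field. Then the map $\kappa^n\colon H^n_{Lie}((\mathfrak{k}_1\oplus\mathfrak{k}_2,\mathfrak{k}_1);\mathfrak{a}) \to H^n_{Lie}(\mathfrak{k}_1\oplus\mathfrak{k}_2;\mathfrak{a})$ induced by inclusion of relative cochains is injective for all $n$; that is, $\mathfrak{k}_1$ is non-cohomologous to zero in $\mathfrak{k}_1\oplus\mathfrak{k}_2$. -/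
/-- Projection onto the second factor, landing in `0 × 𝔨`. -/
def projSnd (𝔨 : Type*) [LieRing 𝔨] [LieAlgebra ℝ 𝔨] : (𝔨 × 𝔨) →ₗ[ℝ] (𝔨 × 𝔨) :=
  LinearMap.prod 0 (LinearMap.snd ℝ 𝔨 𝔨)

lemma proj_expand {𝔨 𝔞 : Type*} [LieRing 𝔨] [LieAlgebra ℝ 𝔨] [AddCommGroup 𝔞] [Module ℝ 𝔞]
    {m : ℕ} (ω : (𝔨 × 𝔨) [⋀^Fin m]→ₗ[ℝ] 𝔞)
    (h0 : ∀ x : Fin m → 𝔨 × 𝔨, (∃ i, (x i).2 = 0) → ω x = 0)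
    (x : Fin m → 𝔨 × 𝔨) : ω x = ω (fun i => (0, (x i).2)) := by
  have key : ∀ s : Finset (Fin m),
      ω x = ω (fun i => if i ∈ s then ((0 : 𝔨), (x i).2) else x i) := by
    intro s
    induction s using Finset.induction_on with
    | empty => simp
    | @insert a s ha ih =>
      set g : Fin m → 𝔨 × 𝔨 := fun i => if i ∈ s then ((0 : 𝔨), (x i).2) else x i with hg
      have h1 : (fun i => if i ∈ insert a s then ((0 : 𝔨), (x i).2) else x i)
          = Function.update g a ((0 : 𝔨), (x a).2) := by
        funext i
        by_cases hi : i = a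
        · subst hi; simp [Function.update]
        · simp [Function.update, hi, hg]
      have h2 : g = Function.update g a (x a) := by
        funext i
        by_cases hi : i = a
        · subst hi; simp [Function.update, hg, ha]
        · simp [Function.update, hi]
      have hxa : x a = ((0 : 𝔨), (x a).2) + ((x a).1, (0 : 𝔨)) := by
        ext <;> simp
      rw [ih, h1]
      conv_lhs => rw [h2, hxa]
      rw [ω.map_update_add]
      have : ω (Function.update g a ((x a).1, (0 : 𝔨))) = 0 :=
        h0 _ ⟨a, by simp⟩
      rw [this, add_zero]
  have := key Finset.univ
  simpa using this

/-- for `𝔤 = 𝔨 ⊕ 𝔨` (two copies of the same Lie algebra `𝔨`) and a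
trivial module `𝔞` over the field `ℝ`, the map
`κⁿ : H^n_{Lie}((𝔨⊕𝔨,𝔨₁);𝔞) → H^n_{Lie}(𝔨⊕𝔨;𝔞)` induced by the inclusion of
relative cochains is injective in every (positive) degree `n + 1`; that is, the
first factor `𝔨₁` is non-cohomologous to zero in `𝔨 ⊕ 𝔨`: any relative cocycle
which is a coboundary in the full complex is already a relative coboundary. -/
theorem first_factor_ncz_in_double
    {𝔨 𝔞 : Type*} [LieRing 𝔨] [LieAlgebra ℝ 𝔨] [AddCommGroup 𝔞] [Module ℝ 𝔞]
    (n : ℕ)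
    (br : (𝔨 × 𝔨) → (𝔨 × 𝔨) → (𝔨 × 𝔨)) (hbr : br = fun a b => (⁅a.1, b.1⁆, ⁅a.2, b.2⁆))
    (ω : (𝔨 × 𝔨) [⋀^Fin (n + 1)]→ₗ[ℝ] 𝔞)
    (hrel : IsRelCochain br (fun _ _ => (0 : 𝔞)) {p : 𝔨 × 𝔨 | p.2 = 0} ⇑ω)
    (hcocycle : lieD br (fun _ _ => (0 : 𝔞)) (n + 1) ⇑ω = 0)
    (hbdry : ∃ β : (𝔨 × 𝔨) [⋀^Fin n]→ₗ[ℝ] 𝔞,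
      ⇑ω = lieD br (fun _ _ => (0 : 𝔞)) n ⇑β) :
    ∃ β' : (𝔨 × 𝔨) [⋀^Fin n]→ₗ[ℝ] 𝔞,
      IsRelCochain br (fun _ _ => (0 : 𝔞)) {p : 𝔨 × 𝔨 | p.2 = 0} ⇑β' ∧
      ⇑ω = lieD br (fun _ _ => (0 : 𝔞)) n ⇑β' := by
  obtain ⟨β, hβ⟩ := hbdry
  set π := projSnd 𝔨 with hπ
  have hπ_apply : ∀ p : 𝔨 × 𝔨, π p = ((0 : 𝔨), p.2) := fun p => rfl
  have hπbr : ∀ a b : 𝔨 × 𝔨, π (br a b) = br (π a) (π b) := by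
    intro a b
    simp [hbr, hπ_apply, Prod.ext_iff]
  refine ⟨β.compLinearMap π, ⟨?_, ?_⟩, ?_⟩
  · -- vanishing on first factor
    rintro x ⟨i, hi⟩
    rw [AlternatingMap.compLinearMap_apply]
    refine β.map_coord_zero i ?_
    have h2 : (x i).2 = 0 := hi
    show π (x i) = 0
    simp [hπ_apply, h2, Prod.ext_iff]
  · -- invariance
    intro y hy x
    have hy2 : y.2 = 0 := hy
    have hz : ∀ i : Fin n,
        (β.compLinearMap π) (Function.update x i (br (x i) y)) = 0 := by
      intro i
      rw [AlternatingMap.compLinearMap_apply]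
      refine β.map_coord_zero i ?_
      show π (Function.update x i (br (x i) y) i) = 0
      simp [hbr, hπ_apply, hy2, Prod.ext_iff]
    simp [hz]
  · -- coboundary identity
    funext x
    have hω0 : ∀ z : Fin (n + 1) → 𝔨 × 𝔨, (∃ i, (z i).2 = 0) → ω z = 0 :=
      fun z hz => hrel.1 z hz
    have hωπ : ω x = ω (⇑π ∘ x) := by
      rw [proj_expand ω hω0 x]; rfl
    have hd : lieD br (fun _ _ => (0 : 𝔞)) n ⇑(β.compLinearMap π) x
        = lieD br (fun _ _ => (0 : 𝔞)) n ⇑β (⇑π ∘ x) := by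
      simp only [lieD, smul_zero, Finset.sum_const_zero, zero_add,
        AlternatingMap.compLinearMap_apply]
      refine Finset.sum_congr rfl fun i _ => Finset.sum_congr rfl fun j _ => ?_
      by_cases hij : (i : ℕ) < (j : ℕ)
      · simp only [hij, if_true]
        refine congrArg (fun t : 𝔞 => ((-1 : ℤ) ^ ((i : ℕ) + (j : ℕ))) • t)
          (congrArg (⇑β) (funext fun k => ?_))
        by_cases hk : (k : ℕ) = 0
        · simp [hk, Function.comp, hπbr]
        · simp [hk, Function.comp]
      · simp [hij]
    rw [hd, ← congrFun hβ (⇑π ∘ x), ← hωπ]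
end
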